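/- Let A ∈ M_{m,n}(ℝ) and let K₁, K₂ be proper cones in ℝⁿ and ℝᵐ respectively. Then A + B is (K₁,K₂)-semipositive for every (K₁,K₂)-semipositive matrix B if and only if A(K₁) ⊆ K₂. -/

import Mathlib

open Matrix Pointwise

/-- A proper cone in `ℝⁿ`: a topologically closed, pointed convex cone with
nonempty interior. -/
def IsProperCone {n : ℕ} (K : Set (Fin n → ℝ)) : Prop :=
  IsClosed K ∧ (∀ x ∈ K, ∀ y ∈ K, x + y ∈ K) ∧
    (∀ (c : ℝ), 0 ≤ c → ∀ x ∈ K, c • x ∈ K) ∧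
    (∀ x ∈ K, -x ∈ K → x = 0) ∧ (interior K).Nonempty

/-- `A` is `(K₁, K₂)`-semipositive: there is `x ∈ K₁°` with `Ax ∈ K₂°`. -/
def Semipositive {n m : ℕ} (K₁ : Set (Fin n → ℝ)) (K₂ : Set (Fin m → ℝ))
    (A : Matrix (Fin m) (Fin n) ℝ) : Prop :=
  ∃ x ∈ interior K₁, A *ᵥ x ∈ interior K₂

/-- The interior of a cone is closed under positive scaling. -/
lemma cone_smul_interior {n : ℕ} {K : Set (Fin n → ℝ)}
    (hs : ∀ (c : ℝ), 0 ≤ c → ∀ x ∈ K, c • x ∈ K) {c : ℝ} (hc : 0 < c)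
    {z : Fin n → ℝ} (hz : z ∈ interior K) : c • z ∈ interior K := by
  have h1 : c • K ⊆ K := by
    rintro _ ⟨x, hx, rfl⟩
    exact hs c hc.le x hx
  have h2 : c • z ∈ c • interior K := Set.smul_mem_smul_set hz
  rw [← interior_smul₀ hc.ne' K] at h2
  exact interior_mono h1 h2

/-- Adding a cone element to an interior point stays in the interior. -/
lemma cone_add_interior {n : ℕ} {K : Set (Fin n → ℝ)}
    (ha : ∀ x ∈ K, ∀ y ∈ K, x + y ∈ K) {y z : Fin n → ℝ}
    (hy : y ∈ K) (hz : z ∈ interior K) : y + z ∈ interior K := by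
  have hopen : IsOpen ((y + ·) '' interior K) :=
    (Homeomorph.addLeft y).isOpenMap _ isOpen_interior
  have hsub : (y + ·) '' interior K ⊆ K := by
    rintro _ ⟨w, hw, rfl⟩
    exact ha y hy w (interior_subset hw)
  exact interior_maximal hsub hopen ⟨z, hz, rfl⟩

theorem stmt_3 {n m : ℕ} (K₁ : Set (Fin n → ℝ)) (K₂ : Set (Fin m → ℝ))
    (hK₁ : IsProperCone K₁) (hK₂ : IsProperCone K₂)
    (A : Matrix (Fin m) (Fin n) ℝ) :
    (∀ B : Matrix (Fin m) (Fin n) ℝ, Semipositive K₁ K₂ B → Semipositive K₁ K₂ (A + B)) ↔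
      ∀ x ∈ K₁, A *ᵥ x ∈ K₂ := by
  obtain ⟨hK₁c, hK₁a, hK₁s, hK₁p, hK₁i⟩ := hK₁
  obtain ⟨hK₂c, hK₂a, hK₂s, hK₂p, hK₂i⟩ := hK₂
  have h0₂ : (0 : Fin m → ℝ) ∈ K₂ := by
    obtain ⟨d, hd⟩ := hK₂i
    simpa using hK₂s 0 le_rfl d (interior_subset hd)
  constructor
  · -- hard direction
    intro H x hx
    by_contra hAx
    -- move x into the interior of K₁ while keeping A x outside K₂
    obtain ⟨e, he⟩ := hK₁i
    have hconv₁ : Convex ℝ K₁ := by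
      intro a ha b hb s t hs ht hst
      exact hK₁a _ (hK₁s s hs a ha) _ (hK₁s t ht b hb)
    have hAcont : Continuous (fun y : Fin n → ℝ => A *ᵥ y) :=
      LinearMap.continuous_of_finiteDimensional A.mulVecLin
    have hcont : ContinuousAt (fun t : ℝ => A *ᵥ (t • e + (1 - t) • x)) 0 := by
      apply Continuous.continuousAt
      exact hAcont.comp (by fun_prop)
    have h0val : (fun t : ℝ => A *ᵥ (t • e + (1 - t) • x)) 0 ∈ K₂ᶜ := by
      simpa using hAx
    have hev : ∀ᶠ t in nhds (0 : ℝ),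
        A *ᵥ (t • e + (1 - t) • x) ∈ K₂ᶜ :=
      hcont.eventually_mem (hK₂c.isOpen_compl.mem_nhds h0val)
    obtain ⟨δ, hδpos, hδ⟩ := Metric.eventually_nhds_iff.mp hev
    set t : ℝ := min (δ / 2) (1 / 2) with ht
    have htpos : 0 < t := lt_min (by positivity) (by norm_num)
    have ht1 : t ≤ 1 / 2 := min_le_right _ _
    have htδ : dist t 0 < δ := by
      rw [Real.dist_eq, sub_zero, abs_of_pos htpos]
      exact lt_of_le_of_lt (min_le_left _ _) (by linarith)
    set x₀ : Fin n → ℝ := t • e + (1 - t) • x with hx₀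
    have hx₀i : x₀ ∈ interior K₁ :=
      hconv₁.combo_interior_self_mem_interior he hx htpos (by linarith) (by ring)
    have hAx₀ : A *ᵥ x₀ ∉ K₂ := hδ htδ
    -- separate A x₀ from K₂
    have hconv₂ : Convex ℝ K₂ := by
      intro a ha b hb s t hs ht hst
      exact hK₂a _ (hK₂s s hs a ha) _ (hK₂s t ht b hb)
    obtain ⟨f, u, hfu, hK₂f⟩ := geometric_hahn_banach_point_closed hconv₂ hK₂c hAx₀
    have hu0 : u < 0 := by simpa using hK₂f 0 h0₂
    have hfpos : ∀ z ∈ K₂, 0 ≤ f z := by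
      intro z hz
      by_contra hneg
      push_neg at hneg
      have hc : (0 : ℝ) < 2 * u / f z :=
        div_pos_of_neg_of_neg (by linarith) hneg
      have h2 := hK₂f _ (hK₂s _ hc.le z hz)
      rw [f.map_smul, smul_eq_mul, div_mul_cancel₀ _ hneg.ne] at h2
      linarith
    have hfAx₀ : f (A *ᵥ x₀) < 0 := lt_trans hfu hu0
    -- f is strictly positive on the interior of K₂
    have hfint : ∀ z ∈ interior K₂, 0 < f z := by
      intro z hz
      rcases lt_or_ge 0 (f z) with h | h
      · exact h
      exfalso
      have hcont2 : ContinuousAt (fun s : ℝ => z + s • (A *ᵥ x₀)) 0 := by fun_prop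
      have hev2 : ∀ᶠ s in nhds (0 : ℝ), z + s • (A *ᵥ x₀) ∈ interior K₂ :=
        hcont2.eventually_mem (by simpa using isOpen_interior.mem_nhds hz)
      obtain ⟨ε, hεpos, hε⟩ := Metric.eventually_nhds_iff.mp hev2
      have hdist : dist (ε / 2) (0 : ℝ) < ε := by
        rw [Real.dist_eq, sub_zero, abs_of_pos (by positivity)]; linarith
      have hmem : z + (ε / 2) • (A *ᵥ x₀) ∈ K₂ := interior_subset (hε hdist)
      have h3 := hfpos _ hmem
      rw [f.map_add, f.map_smul, smul_eq_mul] at h3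
      nlinarith
    -- the interior point d of K₂
    obtain ⟨d, hd⟩ := hK₂i
    have hfd : 0 < f d := hfint d hd
    -- build the bad matrix B
    set w : Fin n → ℝ :=
      fun j => -(f d)⁻¹ * f (A *ᵥ Pi.single j (1 : ℝ)) with hw
    have hwdot : ∀ y : Fin n → ℝ, w ⬝ᵥ y = -(f d)⁻¹ * f (A *ᵥ y) := by
      intro y
      have hy : f (A *ᵥ y) = ∑ j, y j * f (A *ᵥ Pi.single j (1 : ℝ)) := by
        conv_lhs => rw [← Finset.univ_sum_single y]
        rw [← A.mulVecLin_apply, map_sum, map_sum f]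
        apply Finset.sum_congr rfl
        intro j _
        have hsingle : (Pi.single j (y j) : Fin n → ℝ) = y j • (Pi.single j 1 : Fin n → ℝ) := by
          ext k
          by_cases hk : k = j <;> simp [Pi.single_apply, hk]
        rw [hsingle, LinearMap.map_smul, f.map_smul, smul_eq_mul, A.mulVecLin_apply]
      rw [hy, dotProduct, Finset.mul_sum]
      apply Finset.sum_congr rfl
      intro j _
      ring
    set B : Matrix (Fin m) (Fin n) ℝ := Matrix.vecMulVec d w with hB
    have hBv : ∀ y : Fin n → ℝ, B *ᵥ y = (w ⬝ᵥ y) • d := by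
      intro y
      ext i
      simp [hB, Matrix.vecMulVec, Matrix.mulVec, dotProduct, Finset.mul_sum,
        mul_comm, mul_assoc, mul_left_comm]
    -- B is semipositive
    have hwx₀ : 0 < w ⬝ᵥ x₀ := by
      rw [hwdot]
      have : 0 < -(f (A *ᵥ x₀)) := by linarith
      have hinv : 0 < (f d)⁻¹ := inv_pos.mpr hfd
      nlinarith
    have hBsp : Semipositive K₁ K₂ B := by
      refine ⟨x₀, hx₀i, ?_⟩
      rw [hBv]
      exact cone_smul_interior hK₂s hwx₀ hd
    -- derive the contradiction
    obtain ⟨y, hy, hy2⟩ := H B hBsp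
    have hpos : 0 < f ((A + B) *ᵥ y) := hfint _ hy2
    have hzero : f ((A + B) *ᵥ y) = 0 := by
      rw [Matrix.add_mulVec, hBv, f.map_add, f.map_smul, smul_eq_mul, hwdot]
      field_simp
      ring
    rw [hzero] at hpos
    exact lt_irrefl 0 hpos
  · -- easy direction
    intro hA B hB
    obtain ⟨x, hx, hBx⟩ := hB
    refine ⟨x, hx, ?_⟩
    rw [Matrix.add_mulVec]
    exact cone_add_interior hK₂a (hA x (interior_subset hx)) hBx
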